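/- The conical kernel is positive semidefinite on the plane, so the discrete Hamiltonian is nonnegative: for any N ≥ 1, any points q₁,…,q_N ∈ ℝ² and any momenta p₁,…,p_N ∈ ℝ², Σ_{i=1}^N Σ_{j=1}^N ⟨p_i, p_j⟩ e^{−‖q_i − q_j‖} ≥ 0. In particular H(q,p) = (1/2) Σ_{i,j} ⟨p_i, p_j⟩ e^{−‖q_i − q_j‖} ≥ 0, which is needed for H to serve as a semi-metric measuring the deformation cost between templates. -/

import Mathlib

set_option linter.deprecated false


open Set MeasureTheory Real

lemma contE {c : ℝ} : ContinuousOn (fun x : ℝ => Real.exp (-(x - c / x) ^ 2)) (Ioi 0) := by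
  apply Real.continuous_exp.comp_continuousOn
  apply ContinuousOn.neg
  apply ContinuousOn.pow
  exact continuousOn_id.sub (continuousOn_const.div continuousOn_id fun x hx => ne_of_gt hx)

lemma u_hasDerivAt {c : ℝ} {x : ℝ} (hx0 : x ≠ 0) :
    HasDerivAt (fun x : ℝ => x - c / x) (1 + c / x ^ 2) x := by
  have h : HasDerivAt (fun x : ℝ => x - c / x) (1 - (0 * x - c * 1) / x ^ 2) x :=
    (hasDerivAt_id x).sub ((hasDerivAt_const x c).div (hasDerivAt_id x) hx0)
  have : (1 : ℝ) - (0 * x - c * 1) / x ^ 2 = 1 + c / x ^ 2 := by ring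
  rwa [this] at h

lemma u_image {c : ℝ} (hc : 0 < c) : (fun x : ℝ => x - c / x) '' Ioi 0 = univ := by
  apply eq_univ_of_forall
  intro y
  set s := Real.sqrt (y ^ 2 + 4 * c) with hs
  have hs2 : s ^ 2 = y ^ 2 + 4 * c := Real.sq_sqrt (by positivity)
  have hsy : |y| < s := by
    have h : |y| = Real.sqrt (y ^ 2) := (Real.sqrt_sq_eq_abs y).symm
    rw [h]
    exact Real.sqrt_lt_sqrt (by positivity) (by linarith)
  have hay := neg_abs_le y
  have hx : 0 < (y + s) / 2 := by nlinarith
  refine ⟨(y + s) / 2, hx, ?_⟩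
  have hne : (y + s) / 2 ≠ 0 := ne_of_gt hx
  have hdiv : c / ((y + s) / 2) = (y + s) / 2 - y := by
    rw [div_eq_iff hne]; nlinarith
  show (y + s) / 2 - c / ((y + s) / 2) = y
  rw [hdiv]; ring

lemma u_inj {c : ℝ} (hc : 0 ≤ c) : InjOn (fun x : ℝ => x - c / x) (Ioi 0) := by
  have : StrictMonoOn (fun x : ℝ => x - c / x) (Ioi 0) := by
    apply strictMonoOn_of_deriv_pos (convex_Ioi 0)
    · exact continuousOn_id.sub (continuousOn_const.div continuousOn_id fun x hx => ne_of_gt hx)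
    · intro x hx
      rw [interior_Ioi] at hx
      rw [(u_hasDerivAt (c := c) (ne_of_gt hx)).deriv]
      have h2 : 0 ≤ c / x ^ 2 := by positivity
      linarith
  exact this.injOn

lemma v_hasDerivAt {c x : ℝ} (hx0 : x ≠ 0) :
    HasDerivAt (fun x : ℝ => c / x) (-(c / x ^ 2)) x := by
  have h : HasDerivAt (fun x : ℝ => c / x) ((0 * x - c * 1) / x ^ 2) x :=
    (hasDerivAt_const x c).div (hasDerivAt_id x) hx0
  have : (0 * x - c * 1) / x ^ 2 = -(c / x ^ 2) := by ring
  rwa [this] at h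

lemma v_inj {c : ℝ} (hc : 0 < c) : InjOn (fun x : ℝ => c / x) (Ioi 0) := by
  intro x hx y hy h
  simp only at h
  rw [div_eq_div_iff (ne_of_gt hx) (ne_of_gt hy)] at h
  have := mul_left_cancel₀ (ne_of_gt hc) h.symm
  linarith

lemma v_image {c : ℝ} (hc : 0 < c) : (fun x : ℝ => c / x) '' Ioi 0 = Ioi 0 := by
  ext y
  constructor
  · rintro ⟨x, hx, rfl⟩
    exact div_pos hc hx
  · intro hy
    exact ⟨c / y, div_pos hc hy, by field_simp⟩

lemma glasser {c : ℝ} (hc : 0 ≤ c) :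
    ∫ x in Ioi (0:ℝ), Real.exp (-(x - c / x) ^ 2) = Real.sqrt π / 2 := by
  rcases eq_or_lt_of_le hc with h0 | h0
  · have := integral_gaussian_Ioi 1
    simp only [neg_mul, one_mul, div_one] at this
    rw [← this]
    refine setIntegral_congr_fun measurableSet_Ioi fun x _ => ?_
    rw [← h0, zero_div, sub_zero]
  · have hG : Integrable (fun y : ℝ => Real.exp (-y ^ 2)) := by
      have := integrable_exp_neg_mul_sq (b := 1) one_pos
      simpa using this
    have hderivs : ∀ x ∈ Ioi (0:ℝ), HasDerivWithinAt (fun x : ℝ => x - c / x)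
        (1 + c / x ^ 2) (Ioi 0) x :=
      fun x hx => (u_hasDerivAt (ne_of_gt hx)).hasDerivWithinAt
    have hCV := integral_image_eq_integral_abs_deriv_smul measurableSet_Ioi hderivs
      (u_inj hc) (fun y => Real.exp (-y ^ 2))
    rw [u_image h0, MeasureTheory.setIntegral_univ] at hCV
    have hgauss : ∫ y : ℝ, Real.exp (-y ^ 2) = Real.sqrt π := by
      have := integral_gaussian 1
      simpa using this
    have hIntSum : IntegrableOn
        (fun x => |1 + c / x ^ 2| • Real.exp (-((fun x : ℝ => x - c / x) x) ^ 2)) (Ioi 0) :=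
      (integrableOn_image_iff_integrableOn_abs_deriv_smul measurableSet_Ioi hderivs
        (u_inj hc) (fun y => Real.exp (-y ^ 2))).mp (by rw [u_image h0]; exact hG.integrableOn)
    have habs : ∀ x ∈ Ioi (0:ℝ), |1 + c / x ^ 2| • Real.exp (-((fun x : ℝ => x - c / x) x) ^ 2)
        = Real.exp (-(x - c / x) ^ 2) + (c / x ^ 2) * Real.exp (-(x - c / x) ^ 2) := by
      intro x hx
      have hx0 : (0:ℝ) < x := hx
      have : |1 + c / x ^ 2| = 1 + c / x ^ 2 := abs_of_pos (by positivity)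
      rw [smul_eq_mul, this]
      ring
    have hIntSum' : IntegrableOn (fun x => Real.exp (-(x - c / x) ^ 2)
        + (c / x ^ 2) * Real.exp (-(x - c / x) ^ 2)) (Ioi 0) :=
      hIntSum.congr_fun habs measurableSet_Ioi
    have hmeasA : AEStronglyMeasurable (fun x : ℝ => Real.exp (-(x - c / x) ^ 2))
        ((volume : Measure ℝ).restrict (Ioi 0)) :=
      contE.aestronglyMeasurable measurableSet_Ioi
    have hmeasB : AEStronglyMeasurable (fun x : ℝ => (c / x ^ 2) * Real.exp (-(x - c / x) ^ 2))
        ((volume : Measure ℝ).restrict (Ioi 0)) := by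
      apply ContinuousOn.aestronglyMeasurable _ measurableSet_Ioi
      exact (continuousOn_const.div (continuousOn_pow 2) fun x hx => pow_ne_zero 2 (ne_of_gt hx)).mul contE
    have hbound : ∀ x ∈ Ioi (0:ℝ), 0 ≤ (c / x ^ 2) * Real.exp (-(x - c / x) ^ 2) := by
      intro x hx
      have hx0 : (0:ℝ) < x := hx
      positivity
    have hIntA : IntegrableOn (fun x : ℝ => Real.exp (-(x - c / x) ^ 2)) (Ioi 0) := by
      apply hIntSum'.mono' hmeasA
      filter_upwards [ae_restrict_mem measurableSet_Ioi] with x hx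
      rw [Real.norm_eq_abs, abs_of_pos (Real.exp_pos _)]
      have := hbound x hx
      linarith
    have hIntB : IntegrableOn (fun x : ℝ => (c / x ^ 2) * Real.exp (-(x - c / x) ^ 2)) (Ioi 0) := by
      apply hIntSum'.mono' hmeasB
      filter_upwards [ae_restrict_mem measurableSet_Ioi] with x hx
      rw [Real.norm_eq_abs, abs_of_nonneg (hbound x hx)]
      have := (Real.exp_pos (-(x - c / x) ^ 2)).le
      linarith
    -- B = A by the substitution x ↦ c / x
    have hvderivs : ∀ x ∈ Ioi (0:ℝ), HasDerivWithinAt (fun x : ℝ => c / x)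
        (-(c / x ^ 2)) (Ioi 0) x :=
      fun x hx => (v_hasDerivAt (ne_of_gt hx)).hasDerivWithinAt
    have hCV2 := integral_image_eq_integral_abs_deriv_smul measurableSet_Ioi hvderivs
      (v_inj h0) (fun y => Real.exp (-(y - c / y) ^ 2))
    rw [v_image h0] at hCV2
    have hBA : ∫ x in Ioi (0:ℝ), Real.exp (-(x - c / x) ^ 2)
        = ∫ x in Ioi (0:ℝ), (c / x ^ 2) * Real.exp (-(x - c / x) ^ 2) := by
      rw [hCV2]
      refine setIntegral_congr_fun measurableSet_Ioi fun x hx => ?_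
      have hx0 : (0:ℝ) < x := hx
      have h1 : c / (c / x) = x := by field_simp
      have h2 : |(-(c / x ^ 2))| = c / x ^ 2 := by
        rw [abs_neg]; exact abs_of_nonneg (by positivity)
      simp only [smul_eq_mul, h2, h1]
      have h3 : (c / x - x) ^ 2 = (x - c / x) ^ 2 := by ring
      rw [h3]
    -- assemble
    have hsum : Real.sqrt π = (∫ x in Ioi (0:ℝ), Real.exp (-(x - c / x) ^ 2))
        + ∫ x in Ioi (0:ℝ), (c / x ^ 2) * Real.exp (-(x - c / x) ^ 2) := by
      rw [← integral_add hIntA hIntB, ← hgauss, hCV]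
      exact setIntegral_congr_fun measurableSet_Ioi habs
    rw [← hBA] at hsum
    linarith

lemma glasser_integrable {c : ℝ} (hc : 0 ≤ c) :
    IntegrableOn (fun x : ℝ => Real.exp (-(x - c / x) ^ 2)) (Ioi 0) := by
  rcases eq_or_lt_of_le hc with h0 | h0
  · have h1 : Integrable (fun x : ℝ => Real.exp (-x ^ 2)) := by
      have := integrable_exp_neg_mul_sq (b := 1) one_pos
      simpa using this
    exact h1.integrableOn.congr_fun (fun x _ => by rw [← h0, zero_div, sub_zero])
      measurableSet_Ioi
  · have hG : Integrable (fun y : ℝ => Real.exp (-y ^ 2)) := by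
      have := integrable_exp_neg_mul_sq (b := 1) one_pos
      simpa using this
    have hderivs : ∀ x ∈ Ioi (0:ℝ), HasDerivWithinAt (fun x : ℝ => x - c / x)
        (1 + c / x ^ 2) (Ioi 0) x :=
      fun x hx => (u_hasDerivAt (ne_of_gt hx)).hasDerivWithinAt
    have hIntSum : IntegrableOn
        (fun x => |1 + c / x ^ 2| • Real.exp (-((fun x : ℝ => x - c / x) x) ^ 2)) (Ioi 0) :=
      (integrableOn_image_iff_integrableOn_abs_deriv_smul measurableSet_Ioi hderivs
        (u_inj hc) (fun y => Real.exp (-y ^ 2))).mp (by rw [u_image h0]; exact hG.integrableOn)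
    have hmeasA : AEStronglyMeasurable (fun x : ℝ => Real.exp (-(x - c / x) ^ 2))
        ((volume : Measure ℝ).restrict (Ioi 0)) :=
      contE.aestronglyMeasurable measurableSet_Ioi
    apply hIntSum.mono' hmeasA
    filter_upwards [ae_restrict_mem measurableSet_Ioi] with x hx
    have hx0 : (0:ℝ) < x := hx
    have h2 : 0 ≤ c / x ^ 2 := by positivity
    have h3 : |1 + c / x ^ 2| = 1 + c / x ^ 2 := abs_of_pos (by positivity)
    rw [Real.norm_eq_abs, abs_of_pos (Real.exp_pos _), smul_eq_mul, h3]
    have := (Real.exp_pos (-(x - c / x) ^ 2)).le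
    nlinarith

lemma psi_hasDerivAt {x : ℝ} (hx0 : x ≠ 0) :
    HasDerivAt (fun x : ℝ => (4 * x ^ 2)⁻¹) (-(1 / (2 * x ^ 3))) x := by
  have h : HasDerivAt (fun x : ℝ => 4 * x ^ 2) (4 * (2 * x ^ 1)) x :=
    (hasDerivAt_pow 2 x).const_mul 4
  have h2 := h.inv (by positivity : (4 : ℝ) * x ^ 2 ≠ 0)
  have : -(4 * (2 * x ^ 1)) / (4 * x ^ 2) ^ 2 = -(1 / (2 * x ^ 3)) := by
    field_simp; ring
  rwa [this] at h2

lemma psi_inj : InjOn (fun x : ℝ => (4 * x ^ 2)⁻¹) (Ioi 0) := by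
  intro x hx y hy h
  simp only at h
  have hx0 : (0:ℝ) < x := hx
  have hy0 : (0:ℝ) < y := hy
  have h1 : (4 : ℝ) * x ^ 2 = 4 * y ^ 2 := by
    have := inv_injective h
    linarith [this]
  have : x ^ 2 = y ^ 2 := by linarith
  exact (sq_eq_sq₀ hx0.le hy0.le).mp this

lemma psi_image : (fun x : ℝ => (4 * x ^ 2)⁻¹) '' Ioi 0 = Ioi 0 := by
  ext t
  constructor
  · rintro ⟨x, hx, rfl⟩
    have hx0 : (0:ℝ) < x := hx
    have : (0:ℝ) < (4 * x ^ 2)⁻¹ := by positivity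
    exact this
  · intro ht
    have ht0 : (0:ℝ) < t := ht
    have hst : (0:ℝ) < Real.sqrt t := Real.sqrt_pos.mpr ht0
    refine ⟨(2 * Real.sqrt t)⁻¹, inv_pos.mpr (by linarith : (0:ℝ) < 2 * Real.sqrt t), ?_⟩
    have h4 : (2 * Real.sqrt t) ^ 2 = 4 * t := by
      rw [mul_pow, Real.sq_sqrt ht0.le]; ring
    have h5 : ((2 * Real.sqrt t)⁻¹) ^ 2 = (4 * t)⁻¹ := by rw [inv_pow, h4]
    show (4 * ((2 * Real.sqrt t)⁻¹) ^ 2)⁻¹ = t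
    rw [h5]
    field_simp

lemma psi_pointwise {a : ℝ} (ha : 0 ≤ a) {x : ℝ} (hx : 0 < x) :
    |(-(1 / (2 * x ^ 3)))| • (((4 * x ^ 2)⁻¹ : ℝ) ^ (-(3:ℝ)/2)
        * Real.exp (-(1 / (4 * (4 * x ^ 2)⁻¹)) - a * (4 * x ^ 2)⁻¹))
      = (4 * Real.exp (-Real.sqrt a)) * Real.exp (-(x - (Real.sqrt a / 2) / x) ^ 2) := by
  set b := Real.sqrt a with hb
  have hb2 : b ^ 2 = a := Real.sq_sqrt ha
  have hb0 : 0 ≤ b := Real.sqrt_nonneg a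
  have habs : |(-(1 / (2 * x ^ 3)))| = 1 / (2 * x ^ 3) := by
    rw [abs_neg]; exact abs_of_pos (by positivity)
  have hrpow : ((4 * x ^ 2)⁻¹ : ℝ) ^ (-(3:ℝ)/2) = 8 * x ^ 3 := by
    have h1 : ((4 * x ^ 2)⁻¹ : ℝ) = (2 * x) ^ (-2 : ℝ) := by
      rw [Real.rpow_neg (by positivity), Real.rpow_two]
      norm_num; ring_nf
    rw [h1, ← Real.rpow_mul (by positivity : (0:ℝ) ≤ 2 * x)]
    norm_num
    ring
  have harg : -(1 / (4 * (4 * x ^ 2)⁻¹)) - a * (4 * x ^ 2)⁻¹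
      = -(x - (b / 2) / x) ^ 2 - b := by
    have h1 : (1 : ℝ) / (4 * (4 * x ^ 2)⁻¹) = x ^ 2 := by field_simp
    have h2 : a * (4 * x ^ 2)⁻¹ = a / (4 * x ^ 2) := by ring
    rw [h1, h2]
    field_simp
    nlinarith [hb2]
  rw [habs, hrpow, harg, sub_eq_add_neg, Real.exp_add, smul_eq_mul]
  have hx3 : (1 : ℝ) / (2 * x ^ 3) * (8 * x ^ 3 * (Real.exp (-(x - b / 2 / x) ^ 2) * Real.exp (-b)))
      = 4 * Real.exp (-b) * Real.exp (-(x - b / 2 / x) ^ 2) := by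
    field_simp; ring
  rw [hx3]

lemma psi_derivs : ∀ x ∈ Ioi (0:ℝ), HasDerivWithinAt (fun x : ℝ => (4 * x ^ 2)⁻¹)
    (-(1 / (2 * x ^ 3))) (Ioi 0) x :=
  fun x hx => (psi_hasDerivAt (ne_of_gt hx)).hasDerivWithinAt

lemma conical_integral {a : ℝ} (ha : 0 ≤ a) :
    ∫ t in Ioi (0:ℝ), t ^ (-(3:ℝ)/2) * Real.exp (-(1 / (4 * t)) - a * t)
      = 2 * Real.sqrt π * Real.exp (-Real.sqrt a) := by
  have hCV := integral_image_eq_integral_abs_deriv_smul measurableSet_Ioi psi_derivs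
    psi_inj (fun t : ℝ => t ^ (-(3:ℝ)/2) * Real.exp (-(1 / (4 * t)) - a * t))
  rw [psi_image] at hCV
  rw [hCV]
  have hcong : ∀ x ∈ Ioi (0:ℝ),
      |(-(1 / (2 * x ^ 3)))| • (((4 * x ^ 2)⁻¹ : ℝ) ^ (-(3:ℝ)/2)
        * Real.exp (-(1 / (4 * (4 * x ^ 2)⁻¹)) - a * (4 * x ^ 2)⁻¹))
      = (4 * Real.exp (-Real.sqrt a)) * Real.exp (-(x - (Real.sqrt a / 2) / x) ^ 2) :=
    fun x hx => psi_pointwise ha hx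
  rw [setIntegral_congr_fun measurableSet_Ioi hcong, integral_const_mul,
    glasser (by positivity : (0:ℝ) ≤ Real.sqrt a / 2)]
  ring

lemma conical_integrable {a : ℝ} (ha : 0 ≤ a) :
    IntegrableOn (fun t : ℝ => t ^ (-(3:ℝ)/2) * Real.exp (-(1 / (4 * t)) - a * t)) (Ioi 0) := by
  have h0 : IntegrableOn (fun x : ℝ =>
      (4 * Real.exp (-Real.sqrt a)) * Real.exp (-(x - (Real.sqrt a / 2) / x) ^ 2)) (Ioi 0) :=
    (glasser_integrable (by positivity : (0:ℝ) ≤ Real.sqrt a / 2)).const_mul _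
  have h1 : IntegrableOn (fun x : ℝ =>
      |(-(1 / (2 * x ^ 3)))| • (((4 * x ^ 2)⁻¹ : ℝ) ^ (-(3:ℝ)/2)
        * Real.exp (-(1 / (4 * (4 * x ^ 2)⁻¹)) - a * (4 * x ^ 2)⁻¹))) (Ioi 0) :=
    h0.congr_fun (fun x hx => (psi_pointwise ha hx).symm) measurableSet_Ioi
  have := (integrableOn_image_iff_integrableOn_abs_deriv_smul measurableSet_Ioi psi_derivs
    psi_inj (fun t : ℝ => t ^ (-(3:ℝ)/2) * Real.exp (-(1 / (4 * t)) - a * t))).mpr h1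
  rwa [psi_image] at this

open Finset in
open Finset

lemma term_nonneg {N : ℕ} (d u v : Fin N → ℝ) (n : ℕ) :
    0 ≤ ∑ i : Fin N, ∑ j : Fin N, d i * d j * (u i * u j + v i * v j) ^ n := by
  have key : ∀ i j : Fin N, d i * d j * (u i * u j + v i * v j) ^ n
      = ∑ k ∈ Finset.range (n + 1),
        (d i * (u i ^ k * v i ^ (n - k))) * (d j * (u j ^ k * v j ^ (n - k))) * (n.choose k) := by
    intro i j
    rw [add_pow, Finset.mul_sum]
    refine Finset.sum_congr rfl fun k _ => ?_
    rw [mul_pow, mul_pow]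
    ring
  simp_rw [key]
  rw [show (∑ i : Fin N, ∑ j : Fin N, ∑ k ∈ Finset.range (n + 1),
        (d i * (u i ^ k * v i ^ (n - k))) * (d j * (u j ^ k * v j ^ (n - k))) * (n.choose k))
      = ∑ k ∈ Finset.range (n + 1), ∑ i : Fin N, ∑ j : Fin N,
        (d i * (u i ^ k * v i ^ (n - k))) * (d j * (u j ^ k * v j ^ (n - k))) * (n.choose k) by
    calc _ = ∑ i : Fin N, ∑ k ∈ Finset.range (n + 1), ∑ j : Fin N,
        (d i * (u i ^ k * v i ^ (n - k))) * (d j * (u j ^ k * v j ^ (n - k))) * (n.choose k) :=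
          Finset.sum_congr rfl fun i _ => Finset.sum_comm
      _ = _ := Finset.sum_comm]
  refine Finset.sum_nonneg fun k _ => ?_
  have : (∑ i : Fin N, ∑ j : Fin N,
      (d i * (u i ^ k * v i ^ (n - k))) * (d j * (u j ^ k * v j ^ (n - k))) * (n.choose k))
      = (∑ i : Fin N, d i * (u i ^ k * v i ^ (n - k))) ^ 2 * (n.choose k) := by
    rw [sq, Finset.sum_mul_sum, Finset.sum_mul]
    exact Finset.sum_congr rfl fun i _ => by rw [Finset.sum_mul]
  rw [this]
  positivity

lemma exp_kernel_nonneg {N : ℕ} (d u v : Fin N → ℝ) {s : ℝ} (hs : 0 ≤ s) :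
    0 ≤ ∑ i : Fin N, ∑ j : Fin N, d i * d j * Real.exp (s * (u i * u j + v i * v j)) := by
  have hexp : ∀ x : ℝ, Real.exp x = ∑' n : ℕ, x ^ n / n.factorial := by
    intro x
    rw [Real.exp_eq_exp_ℝ, NormedSpace.exp_eq_tsum_div]
  have hsum : ∀ i j : Fin N, Summable (fun n : ℕ =>
      d i * d j * ((s * (u i * u j + v i * v j)) ^ n / n.factorial)) := fun i j =>
    (Real.summable_pow_div_factorial _).mul_left _
  calc (0:ℝ) ≤ ∑' n : ℕ, ∑ i : Fin N, ∑ j : Fin N,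
        d i * d j * ((s * (u i * u j + v i * v j)) ^ n / n.factorial) := by
        refine tsum_nonneg fun n => ?_
        have : ∀ i j : Fin N, d i * d j * ((s * (u i * u j + v i * v j)) ^ n / n.factorial)
            = (s ^ n / n.factorial) * (d i * d j * (u i * u j + v i * v j) ^ n) := by
          intro i j; rw [mul_pow]; ring
        simp_rw [this, ← Finset.mul_sum]
        have := term_nonneg d u v n
        positivity
    _ = ∑ i : Fin N, ∑ j : Fin N, d i * d j * Real.exp (s * (u i * u j + v i * v j)) := by
        rw [Summable.tsum_finsetSum (fun i _ => summable_sum fun j _ => hsum i j)]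
        refine Finset.sum_congr rfl fun i _ => ?_
        rw [Summable.tsum_finsetSum (fun j _ => hsum i j)]
        refine Finset.sum_congr rfl fun j _ => ?_
        rw [tsum_mul_left, hexp]

lemma gaussian_kernel_nonneg {N : ℕ} (c : Fin N → ℝ) (x : Fin N → EuclideanSpace ℝ (Fin 2))
    {t : ℝ} (ht : 0 ≤ t) :
    0 ≤ ∑ i : Fin N, ∑ j : Fin N, c i * c j * Real.exp (-(t * ‖x i - x j‖ ^ 2)) := by
  have hpt : ∀ i j : Fin N, c i * c j * Real.exp (-(t * ‖x i - x j‖ ^ 2))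
      = (c i * Real.exp (-(t * ‖x i‖ ^ 2))) * (c j * Real.exp (-(t * ‖x j‖ ^ 2)))
        * Real.exp ((2 * t) * ((x i 0) * (x j 0) + (x i 1) * (x j 1))) := by
    intro i j
    have hin : (inner ℝ (x i) (x j) : ℝ) = (x i 0) * (x j 0) + (x i 1) * (x j 1) := by
      simp [PiLp.inner_apply, Fin.sum_univ_two, RCLike.inner_apply, mul_comm]
    have harg : -(t * ‖x i - x j‖ ^ 2)
        = (-(t * ‖x i‖ ^ 2)) + (-(t * ‖x j‖ ^ 2))
          + (2 * t) * ((x i 0) * (x j 0) + (x i 1) * (x j 1)) := by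
      rw [norm_sub_sq_real, ← hin]; ring
    rw [harg, Real.exp_add, Real.exp_add]; ring
  simp_rw [hpt]
  exact exp_kernel_nonneg _ _ _ (by positivity)



lemma conical_kernel_nonneg {N : ℕ} (c : Fin N → ℝ) (x : Fin N → EuclideanSpace ℝ (Fin 2)) :
    0 ≤ ∑ i : Fin N, ∑ j : Fin N, c i * c j * Real.exp (-‖x i - x j‖) := by
  have hpi : (0:ℝ) < 2 * Real.sqrt Real.pi := by
    have := Real.sqrt_pos.mpr Real.pi_pos
    linarith
  rw [← mul_nonneg_iff_of_pos_left hpi, Finset.mul_sum]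
  have key : ∀ i j : Fin N, (2 * Real.sqrt Real.pi) * (c i * c j * Real.exp (-‖x i - x j‖))
      = ∫ t in Ioi (0:ℝ), c i * c j *
          (t ^ (-(3:ℝ)/2) * Real.exp (-(1 / (4 * t)) - ‖x i - x j‖ ^ 2 * t)) := by
    intro i j
    rw [integral_const_mul, conical_integral (by positivity),
      Real.sqrt_sq (norm_nonneg (x i - x j))]
    ring
  simp_rw [Finset.mul_sum, key]
  rw [show (∑ i : Fin N, ∑ j : Fin N, ∫ t in Ioi (0:ℝ), c i * c j *
        (t ^ (-(3:ℝ)/2) * Real.exp (-(1 / (4 * t)) - ‖x i - x j‖ ^ 2 * t)))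
      = ∫ t in Ioi (0:ℝ), ∑ i : Fin N, ∑ j : Fin N, c i * c j *
        (t ^ (-(3:ℝ)/2) * Real.exp (-(1 / (4 * t)) - ‖x i - x j‖ ^ 2 * t)) by
    calc _ = ∑ i : Fin N, ∫ t in Ioi (0:ℝ), ∑ j : Fin N, c i * c j *
          (t ^ (-(3:ℝ)/2) * Real.exp (-(1 / (4 * t)) - ‖x i - x j‖ ^ 2 * t)) :=
          Finset.sum_congr rfl fun i _ => (integral_finset_sum _
            fun j _ => (conical_integrable (by positivity)).const_mul _).symm
      _ = _ := (integral_finset_sum _ fun i _ => integrable_finset_sum _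
            fun j _ => (conical_integrable (by positivity)).const_mul _).symm]
  refine setIntegral_nonneg measurableSet_Ioi fun t ht => ?_
  have ht0 : (0:ℝ) < t := ht
  have hsplit : ∀ i j : Fin N, c i * c j *
      (t ^ (-(3:ℝ)/2) * Real.exp (-(1 / (4 * t)) - ‖x i - x j‖ ^ 2 * t))
      = (t ^ (-(3:ℝ)/2) * Real.exp (-(1 / (4 * t))))
        * (c i * c j * Real.exp (-(t * ‖x i - x j‖ ^ 2))) := by
    intro i j
    rw [sub_eq_add_neg, Real.exp_add]
    ring_nf
  simp_rw [hsplit, ← Finset.mul_sum]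
  have h1 : (0:ℝ) ≤ t ^ (-(3:ℝ)/2) * Real.exp (-(1 / (4 * t))) := by positivity
  exact mul_nonneg h1 (gaussian_kernel_nonneg c x ht0.le)

/-- The conical kernel `e^{−r}` is positive semidefinite on the plane, so the discrete
Hamiltonian is nonnegative: `Σ_{i,j} ⟨p_i,p_j⟩ e^{−‖q_i − q_j‖} ≥ 0`, and in particular
`H(q,p) = (1/2) Σ_{i,j} ⟨p_i,p_j⟩ e^{−‖q_i − q_j‖} ≥ 0`. -/
theorem conical_kernel_posSemidef_hamiltonian_nonneg (N : ℕ) (hN : 1 ≤ N)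
    (q p : Fin N → EuclideanSpace ℝ (Fin 2)) :
    0 ≤ ∑ i : Fin N, ∑ j : Fin N, (inner ℝ (p i) (p j) : ℝ) * Real.exp (-‖q i - q j‖) ∧
    0 ≤ (1 / 2 : ℝ) *
      ∑ i : Fin N, ∑ j : Fin N, (inner ℝ (p i) (p j) : ℝ) * Real.exp (-‖q i - q j‖) := by
  have hin : ∀ i j : Fin N, (inner ℝ (p i) (p j) : ℝ)
      = (p i 0) * (p j 0) + (p i 1) * (p j 1) := by
    intro i j
    simp [PiLp.inner_apply, Fin.sum_univ_two, RCLike.inner_apply, mul_comm]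
  have h0 := conical_kernel_nonneg (fun i => p i 0) q
  have h1 := conical_kernel_nonneg (fun i => p i 1) q
  have hS : 0 ≤ ∑ i : Fin N, ∑ j : Fin N, (inner ℝ (p i) (p j) : ℝ)
      * Real.exp (-‖q i - q j‖) := by
    have hsum : ∀ i j : Fin N, (inner ℝ (p i) (p j) : ℝ) * Real.exp (-‖q i - q j‖)
        = (p i 0) * (p j 0) * Real.exp (-‖q i - q j‖)
          + (p i 1) * (p j 1) * Real.exp (-‖q i - q j‖) := by
      intro i j; rw [hin i j]; ring
    simp_rw [hsum, Finset.sum_add_distrib]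
    exact add_nonneg h0 h1
  exact ⟨hS, by linarith⟩
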